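/- Let J ≥ 1 and let A, B, C be J×J real matrices with A = B + C. Assume A and B are invertible, C is symmetric positive definite, and λ_min(C⁻¹) > λ_max(C⁻¹)·(‖A − I_J‖·(1 + ‖B − I_J‖) + ‖B − I_J‖). Then ‖A⁻¹ − B⁻¹‖ ≤ 1 / (λ_min(C⁻¹) − λ_max(C⁻¹)·(‖A − I_J‖·(1 + ‖B − I_J‖) + ‖B − I_J‖)). -/

import Mathlib

open Matrix

/-- The spectral norm of a real matrix: the operator norm induced by the Euclidean vector norm. -/
noncomputable def specNorm {m n : ℕ} (M : Matrix (Fin m) (Fin n) ℝ) : ℝ :=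
  ‖LinearMap.toContinuousLinearMap (Matrix.toEuclideanLin M)‖

/-- Smallest eigenvalue of a (symmetric) real matrix. -/
noncomputable def eigMin {J : ℕ} (M : Matrix (Fin J) (Fin J) ℝ) : ℝ :=
  sInf (spectrum ℝ M)

/-- Largest eigenvalue of a (symmetric) real matrix. -/
noncomputable def eigMax {J : ℕ} (M : Matrix (Fin J) (Fin J) ℝ) : ℝ :=
  sSup (spectrum ℝ M)

set_option maxHeartbeats 1000000

open scoped Matrix.Norms.L2Operator

lemma specNorm_eq_l2 {m n : ℕ} (M : Matrix (Fin m) (Fin n) ℝ) : specNorm M = ‖M‖ := rfl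

lemma eig_bounds {J : ℕ} (hJ : 1 ≤ J) {M : Matrix (Fin J) (Fin J) ℝ} (hM : M.PosDef) :
    (∀ x : EuclideanSpace ℝ (Fin J),
        sInf (spectrum ℝ M) * ‖x‖ ≤ ‖Matrix.toEuclideanCLM (𝕜 := ℝ) M x‖) ∧
      (∀ x : EuclideanSpace ℝ (Fin J),
        ‖Matrix.toEuclideanCLM (𝕜 := ℝ) M x‖ ≤ sSup (spectrum ℝ M) * ‖x‖) ∧
      0 < sInf (spectrum ℝ M) ∧ 0 < sSup (spectrum ℝ M) := by
  haveI : Nonempty (Fin J) := ⟨⟨0, hJ⟩⟩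
  have hH := hM.1
  set T := Matrix.toEuclideanCLM (𝕜 := ℝ) M with hT
  set b := hH.eigenvectorBasis with hb
  set ev := hH.eigenvalues with hev
  have hspec : spectrum ℝ M = Set.range ev := hH.spectrum_real_eq_range_eigenvalues
  have hfin : (Set.range ev).Finite := Set.finite_range _
  have hne : (Set.range ev).Nonempty := Set.range_nonempty _
  have hmin_mem : sInf (spectrum ℝ M) ∈ Set.range ev := by
    rw [hspec]; exact hne.csInf_mem hfin
  have hpos : ∀ i, 0 < ev i := fun i => hM.eigenvalues_pos i
  have hminpos : 0 < sInf (spectrum ℝ M) := by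
    obtain ⟨i, hi⟩ := hmin_mem; rw [← hi]; exact hpos i
  have hmin_le : ∀ i, sInf (spectrum ℝ M) ≤ ev i := by
    intro i; rw [hspec]; exact csInf_le hfin.bddBelow ⟨i, rfl⟩
  have hle_max : ∀ i, ev i ≤ sSup (spectrum ℝ M) := by
    intro i; rw [hspec]; exact le_csSup hfin.bddAbove ⟨i, rfl⟩
  have hmaxpos : 0 < sSup (spectrum ℝ M) := lt_of_lt_of_le hminpos (by
    obtain ⟨i, hi⟩ := hmin_mem; rw [← hi]; exact hle_max i)
  -- T on eigenbasis
  have hTb : ∀ i, T (b i) = ev i • b i := by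
    intro i
    apply (WithLp.equiv 2 _).injective
    simp [hT, ofLp_toEuclideanCLM, hH.mulVec_eigenvectorBasis]
    exact hH.mulVec_eigenvectorBasis i
  have hsym : (Matrix.toEuclideanLin M).IsSymmetric := isHermitian_iff_isSymmetric.1 hH
  have hrepr : ∀ (x : EuclideanSpace ℝ (Fin J)) i, b.repr (T x) i = ev i * b.repr x i := by
    intro x i
    rw [b.repr_apply_apply, b.repr_apply_apply]
    have hcoe : (T : EuclideanSpace ℝ (Fin J) →ₗ[ℝ] EuclideanSpace ℝ (Fin J))
        = Matrix.toEuclideanLin M := coe_toEuclideanCLM_eq_toEuclideanLin M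
    have happ : ∀ z, T z = Matrix.toEuclideanLin M z := fun z => by rw [← hcoe]; rfl
    calc inner ℝ (b i) (T x) = inner ℝ (T (b i)) x := by
          rw [happ x, happ (b i)]; exact (hsym (b i) x).symm
      _ = ev i * inner ℝ (b i) x := by rw [hTb i, real_inner_smul_left]
  have hnormsq : ∀ (v : EuclideanSpace ℝ (Fin J)), ‖v‖ ^ 2 = ∑ i, (b.repr v i) ^ 2 := by
    intro v
    rw [← b.repr.norm_map v, EuclideanSpace.norm_eq, Real.sq_sqrt (by positivity)]
    simp [sq_abs]
  have hTxsq : ∀ x : EuclideanSpace ℝ (Fin J),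
      ‖T x‖ ^ 2 = ∑ i, (ev i * b.repr x i) ^ 2 := by
    intro x; rw [hnormsq (T x)]; simp_rw [hrepr]
  refine ⟨fun x => ?_, fun x => ?_, hminpos, hmaxpos⟩
  · have h2 : (sInf (spectrum ℝ M) * ‖x‖) ^ 2 ≤ ‖T x‖ ^ 2 := by
      rw [hTxsq, mul_pow, hnormsq x, Finset.mul_sum]
      apply Finset.sum_le_sum
      intro i _
      rw [mul_pow]
      exact mul_le_mul_of_nonneg_right (pow_le_pow_left₀ hminpos.le (hmin_le i) 2) (sq_nonneg _)
    have := Real.sqrt_le_sqrt h2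
    rwa [Real.sqrt_sq (by positivity), Real.sqrt_sq (by positivity)] at this
  · have h2 : ‖T x‖ ^ 2 ≤ (sSup (spectrum ℝ M) * ‖x‖) ^ 2 := by
      rw [hTxsq, mul_pow, hnormsq x, Finset.mul_sum]
      apply Finset.sum_le_sum
      intro i _
      rw [mul_pow]
      exact mul_le_mul_of_nonneg_right (pow_le_pow_left₀ (hpos i).le (hle_max i) 2) (sq_nonneg _)
    have := Real.sqrt_le_sqrt h2
    rwa [Real.sqrt_sq (by positivity), Real.sqrt_sq (by positivity)] at this

/-- If `A = B + C` with `A`, `B` invertible and `C` symmetric positive definite, and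
`λ_min(C⁻¹) > λ_max(C⁻¹)·(‖A − I‖(1 + ‖B − I‖) + ‖B − I‖)`, then
`‖A⁻¹ − B⁻¹‖ ≤ 1/(λ_min(C⁻¹) − λ_max(C⁻¹)(‖A − I‖(1 + ‖B − I‖) + ‖B − I‖))`. -/
theorem stmt0 {J : ℕ} (hJ : 1 ≤ J) (A B C : Matrix (Fin J) (Fin J) ℝ)
    (hABC : A = B + C) (hA : IsUnit A.det) (hB : IsUnit B.det) (hC : C.PosDef)
    (hgap : eigMax C⁻¹ * (specNorm (A - 1) * (1 + specNorm (B - 1)) + specNorm (B - 1))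
      < eigMin C⁻¹) :
    specNorm (A⁻¹ - B⁻¹) ≤
      1 / (eigMin C⁻¹ -
        eigMax C⁻¹ * (specNorm (A - 1) * (1 + specNorm (B - 1)) + specNorm (B - 1))) := by
  haveI : Nonempty (Fin J) := ⟨⟨0, hJ⟩⟩
  have hCdet : IsUnit C.det := isUnit_iff_ne_zero.mpr hC.det_pos.ne'
  have hCi : C⁻¹.PosDef := hC.inv
  obtain ⟨hlow, hup, hminpos, hmaxpos⟩ := eig_bounds hJ hCi
  set φ := Matrix.toEuclideanCLM (𝕜 := ℝ) (n := Fin J) with hφ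
  set m := eigMin C⁻¹
  set X := eigMax C⁻¹
  set a := specNorm (A - 1) with ha
  set b := specNorm (B - 1) with hb
  have ha' : a = ‖A - 1‖ := rfl
  have hb' : b = ‖B - 1‖ := rfl
  have ha0 : 0 ≤ a := by rw [ha']; exact norm_nonneg _
  have hb0 : 0 ≤ b := by rw [hb']; exact norm_nonneg _
  set δ := m - X * (a * (1 + b) + b) with hδdef
  have hδ : 0 < δ := sub_pos.mpr hgap
  -- matrix identities
  have h1 : A * A⁻¹ = 1 := mul_nonsing_inv A hA
  have h2 : B * B⁻¹ = 1 := mul_nonsing_inv B hB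
  have h3 : C⁻¹ * C = 1 := nonsing_inv_mul C hCdet
  have h4 : A * B⁻¹ = 1 + C * B⁻¹ := by rw [hABC, add_mul, h2]
  have hid : (B * C⁻¹ * A) * (A⁻¹ - B⁻¹) = -1 := by
    calc (B * C⁻¹ * A) * (A⁻¹ - B⁻¹)
        = B * C⁻¹ * (A * A⁻¹) - B * C⁻¹ * (A * B⁻¹) := by noncomm_ring
      _ = B * C⁻¹ * 1 - B * C⁻¹ * (1 + C * B⁻¹) := by rw [h1, h4]
      _ = -(B * (C⁻¹ * C) * B⁻¹) := by noncomm_ring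
      _ = -1 := by rw [h3, mul_one, h2]
  -- norm of C⁻¹ and A
  have hCnorm : ‖C⁻¹‖ ≤ X :=
    ContinuousLinearMap.opNorm_le_bound _ hmaxpos.le fun x => hup x
  have hX0 : 0 ≤ X := hmaxpos.le
  have hone : ‖(1 : Matrix (Fin J) (Fin J) ℝ)‖ = 1 := norm_one
  have hAnorm : ‖A‖ ≤ 1 + a := by
    have hA1 : (1 : Matrix (Fin J) (Fin J) ℝ) + (A - 1) = A := by abel
    calc ‖A‖ = ‖1 + (A - 1)‖ := by rw [hA1]
      _ ≤ ‖(1 : Matrix (Fin J) (Fin J) ℝ)‖ + ‖A - 1‖ := norm_add_le _ _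
      _ = 1 + a := by rw [hone, ha']
  -- main estimate
  rw [specNorm_eq_l2]
  rw [show ‖A⁻¹ - B⁻¹‖ = ‖φ (A⁻¹ - B⁻¹)‖ from rfl]
  refine ContinuousLinearMap.opNorm_le_bound _ (by positivity) fun x => ?_
  set y := φ (A⁻¹ - B⁻¹) x with hy
  have hxy : φ (B * C⁻¹ * A) y = -x := by
    have : φ ((B * C⁻¹ * A) * (A⁻¹ - B⁻¹)) x = φ (B * C⁻¹ * A) (φ (A⁻¹ - B⁻¹) x) := by
      rw [_root_.map_mul]; rfl
    rw [hy, ← this, hid, map_neg, _root_.map_one]; rfl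
  have hdec : B * C⁻¹ * A = C⁻¹ + (C⁻¹ * (A - 1) + (B - 1) * (C⁻¹ * A)) := by noncomm_ring
  have hxnorm : ‖x‖ = ‖φ C⁻¹ y + (φ (C⁻¹ * (A - 1)) y + φ ((B - 1) * (C⁻¹ * A)) y)‖ := by
    rw [show φ C⁻¹ y + (φ (C⁻¹ * (A - 1)) y + φ ((B - 1) * (C⁻¹ * A)) y)
        = φ (B * C⁻¹ * A) y by rw [hdec, _root_.map_add, _root_.map_add]; rfl, hxy, norm_neg]
  have hu : ‖φ (C⁻¹ * (A - 1)) y‖ ≤ X * a * ‖y‖ := by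
    calc ‖φ (C⁻¹ * (A - 1)) y‖ ≤ ‖C⁻¹ * (A - 1)‖ * ‖y‖ :=
          (φ (C⁻¹ * (A - 1))).le_opNorm y
      _ ≤ ‖C⁻¹‖ * ‖A - 1‖ * ‖y‖ := by
          gcongr; exact norm_mul_le _ _
      _ ≤ X * a * ‖y‖ := by rw [← ha']; gcongr
  have hv : ‖φ ((B - 1) * (C⁻¹ * A)) y‖ ≤ b * (X * (1 + a)) * ‖y‖ := by
    calc ‖φ ((B - 1) * (C⁻¹ * A)) y‖ ≤ ‖(B - 1) * (C⁻¹ * A)‖ * ‖y‖ :=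
          (φ _).le_opNorm y
      _ ≤ ‖B - 1‖ * ‖C⁻¹ * A‖ * ‖y‖ := by gcongr; exact norm_mul_le _ _
      _ ≤ ‖B - 1‖ * (‖C⁻¹‖ * ‖A‖) * ‖y‖ := by gcongr; exact norm_mul_le _ _
      _ ≤ b * (X * (1 + a)) * ‖y‖ := by
          rw [← hb']; gcongr
  have hmain : δ * ‖y‖ ≤ ‖x‖ := by
    have hlower : m * ‖y‖ ≤ ‖φ C⁻¹ y‖ := hlow y
    have htri : ‖φ C⁻¹ y‖ - (‖φ (C⁻¹ * (A - 1)) y‖ + ‖φ ((B - 1) * (C⁻¹ * A)) y‖) ≤ ‖x‖ := by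
      rw [hxnorm]
      have := norm_add_le (φ (C⁻¹ * (A - 1)) y) (φ ((B - 1) * (C⁻¹ * A)) y)
      have h' := norm_sub_le (φ C⁻¹ y + (φ (C⁻¹ * (A - 1)) y + φ ((B - 1) * (C⁻¹ * A)) y))
        (φ (C⁻¹ * (A - 1)) y + φ ((B - 1) * (C⁻¹ * A)) y)
      simp only [add_sub_cancel_right] at h'
      linarith
    have : δ * ‖y‖ = m * ‖y‖ - (X * a * ‖y‖ + b * (X * (1 + a)) * ‖y‖) := by
      rw [hδdef]; ring
    rw [this]
    linarith
  have hy1 : ‖y‖ ≤ ‖x‖ / δ := (le_div_iff₀ hδ).mpr (by linarith [hmain])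
  calc ‖y‖ ≤ ‖x‖ / δ := hy1
    _ = 1 / δ * ‖x‖ := by ring
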